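/- Let M > 0, λ ≥ 0, c₀ > 0, δ₁ > 0, and δ > c₀², and let R be a Kruskal radius function on (−δ, c₀² + δ). Let Ω = {(μ,ν) ∈ ℝ² : μ < c₀ + δ₁, ν < c₀ + δ₁, μ + ν > −δ₁, −δ < μ·ν < c₀² + δ}, and let w : ℝ² → ℝ be smooth on Ω and satisfy the λ-mode wave equation in Kruskal coordinates at every point of Ω. If w(μ,ν) = 0 for every (μ,ν) ∈ Ω with μ ≤ 0, and w(μ,ν) = 0 for every (μ,ν) ∈ Ω with ν ≤ 0, then w(μ,ν) = 0 for all (μ,ν) ∈ [0,c₀] × [0,c₀]. (Unique continuation / finite-speed-of-propagation step in the proof of Theorem 5.1: vanishing of the extended solution below the characteristic segment {μ + ν = 0} forces vanishing in its domain of dependence.) -/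

import Mathlib

open MeasureTheory Filter Set Function
open scoped ContDiff

/-- A Kruskal radius function on `(−δ, X)`: a smooth positive function `R` with
`e^{R(x)/(2M)}·(R(x) − 2M) = x`, expressing the Schwarzschild radius in terms of the
product `μ·ν` of the Kruskal coordinates. -/
def IsKruskalRadius (M δ X : ℝ) (R : ℝ → ℝ) : Prop :=
  ContDiffOn ℝ ∞ R (Set.Ioo (-δ) X) ∧
  ∀ x ∈ Set.Ioo (-δ) X, 0 < R x ∧ Real.exp (R x/(2*M)) * (R x - 2*M) = x

/-- The λ-mode wave equation in Kruskal coordinates at the point `(μ,ν)`: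
`∂_ν(R(μν)²·∂_μ w) + ∂_μ(R(μν)²·∂_ν w) = (8M²λ²/(R(μν)·e^{R(μν)/(2M)}))·w`. -/
def KruskalEqAt (M lam : ℝ) (R : ℝ → ℝ) (w : ℝ → ℝ → ℝ) (μ ν : ℝ) : Prop :=
  deriv (fun n => (R (μ*n))^2 * deriv (fun m => w m n) μ) ν
    + deriv (fun m => (R (m*ν))^2 * deriv (fun n => w m n) ν) μ
    = (8*M^2*lam^2 / (R (μ*ν) * Real.exp (R (μ*ν)/(2*M)))) * w μ ν

/-- The domain used in the unique continuation step of Theorem 5.1. -/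
def KruskalDomain (c₀ δ₁ δ : ℝ) : Set (ℝ × ℝ) :=
  {p : ℝ × ℝ | p.1 < c₀ + δ₁ ∧ p.2 < c₀ + δ₁ ∧ -δ₁ < p.1 + p.2 ∧
    -δ < p.1 * p.2 ∧ p.1 * p.2 < c₀^2 + δ}

/-! ### Auxiliary lemmas -/

lemma UC.kd_open (c₀ δ₁ δ : ℝ) : IsOpen (KruskalDomain c₀ δ₁ δ) := by
  have h1 : IsOpen {p : ℝ × ℝ | p.1 < c₀ + δ₁} := isOpen_lt continuous_fst continuous_const
  have h2 : IsOpen {p : ℝ × ℝ | p.2 < c₀ + δ₁} := isOpen_lt continuous_snd continuous_const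
  have h3 : IsOpen {p : ℝ × ℝ | -δ₁ < p.1 + p.2} :=
    isOpen_lt continuous_const (continuous_fst.add continuous_snd)
  have h4 : IsOpen {p : ℝ × ℝ | -δ < p.1 * p.2} :=
    isOpen_lt continuous_const (continuous_fst.mul continuous_snd)
  have h5 : IsOpen {p : ℝ × ℝ | p.1 * p.2 < c₀^2 + δ} :=
    isOpen_lt (continuous_fst.mul continuous_snd) continuous_const
  unfold KruskalDomain
  simp only [setOf_and]
  exact h1.inter (h2.inter (h3.inter (h4.inter h5)))

lemma UC.kd_mem {c₀ δ₁ δ : ℝ} (hc₀ : 0 < c₀) (hδ₁ : 0 < δ₁) (hδ : c₀^2 < δ)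
    {μ ν : ℝ} (hμ : μ ∈ Set.Icc 0 c₀) (hν : ν ∈ Set.Icc 0 c₀) :
    (μ, ν) ∈ KruskalDomain c₀ δ₁ δ := by
  obtain ⟨hμ0, hμ1⟩ := hμ; obtain ⟨hν0, hν1⟩ := hν
  refine ⟨by linarith, by linarith, by linarith, by nlinarith, by nlinarith⟩

lemma UC.slice1 {E : Type*} [NormedAddCommGroup E] [NormedSpace ℝ E] (f : ℝ × ℝ → E)
    (D : ℝ × ℝ →L[ℝ] E) (μ ν : ℝ) (hf : HasFDerivAt f D (μ, ν)) :
    HasDerivAt (fun m => f (m, ν)) (D (1, 0)) μ := by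
  have h : HasDerivAt (fun m : ℝ => (m, ν)) ((1:ℝ), (0:ℝ)) μ :=
    (hasDerivAt_id μ).prodMk (hasDerivAt_const μ ν)
  exact hf.comp_hasDerivAt μ h

lemma UC.slice2 {E : Type*} [NormedAddCommGroup E] [NormedSpace ℝ E] (f : ℝ × ℝ → E)
    (D : ℝ × ℝ →L[ℝ] E) (μ ν : ℝ) (hf : HasFDerivAt f D (μ, ν)) :
    HasDerivAt (fun n => f (μ, n)) (D (0, 1)) ν := by
  have h : HasDerivAt (fun n : ℝ => (μ, n)) ((0:ℝ), (1:ℝ)) ν :=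
    (hasDerivAt_const ν μ).prodMk (hasDerivAt_id ν)
  exact hf.comp_hasDerivAt ν h

lemma UC.slice2_clm (f' : ℝ × ℝ → (ℝ × ℝ →L[ℝ] ℝ)) (D2 : ℝ × ℝ →L[ℝ] (ℝ × ℝ →L[ℝ] ℝ))
    (μ ν : ℝ) (v : ℝ × ℝ) (hf : HasFDerivAt f' D2 (μ, ν)) :
    HasDerivAt (fun n => f' (μ, n) v) (D2 (0, 1) v) ν := by
  have h := (UC.slice2 f' D2 μ ν hf).clm_apply (hasDerivAt_const ν v)
  simpa using h

lemma UC.slice1_clm (f' : ℝ × ℝ → (ℝ × ℝ →L[ℝ] ℝ)) (D2 : ℝ × ℝ →L[ℝ] (ℝ × ℝ →L[ℝ] ℝ))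
    (μ ν : ℝ) (v : ℝ × ℝ) (hf : HasFDerivAt f' D2 (μ, ν)) :
    HasDerivAt (fun m => f' (m, ν) v) (D2 (1, 0) v) μ := by
  have h := (UC.slice1 f' D2 μ ν hf).clm_apply (hasDerivAt_const μ v)
  simpa using h

set_option maxHeartbeats 4000000 in
/-- Unique continuation / finite speed of propagation step in the proof of Theorem 5.1:
a smooth solution of the λ-mode Kruskal wave equation vanishing on `{μ ≤ 0}` and on
`{ν ≤ 0}` vanishes on `[0,c₀] × [0,c₀]`. -/
theorem unique_continuation_kruskal
    (M lam c₀ δ₁ δ : ℝ) (hM : 0 < M) (hlam : 0 ≤ lam)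
    (hc₀ : 0 < c₀) (hδ₁ : 0 < δ₁) (hδ : c₀^2 < δ)
    (R : ℝ → ℝ) (hR : IsKruskalRadius M δ (c₀^2 + δ) R)
    (w : ℝ → ℝ → ℝ)
    (hw : ContDiffOn ℝ ∞ (Function.uncurry w) (KruskalDomain c₀ δ₁ δ))
    (heq : ∀ p ∈ KruskalDomain c₀ δ₁ δ, KruskalEqAt M lam R w p.1 p.2)
    (h1 : ∀ p ∈ KruskalDomain c₀ δ₁ δ, p.1 ≤ 0 → w p.1 p.2 = 0)
    (h2 : ∀ p ∈ KruskalDomain c₀ δ₁ δ, p.2 ≤ 0 → w p.1 p.2 = 0) :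
    ∀ μ ∈ Set.Icc (0:ℝ) c₀, ∀ ν ∈ Set.Icc (0:ℝ) c₀, w μ ν = 0 := by
  have h1le : (1 : WithTop ℕ∞) ≤ ∞ := by
    rw [show ((1:WithTop ℕ∞)) = ((1:ℕ∞) : WithTop ℕ∞) by rfl]
    exact WithTop.coe_le_coe.mpr le_top
  have h2le : (2 : WithTop ℕ∞) ≤ ∞ := by
    rw [show ((2:WithTop ℕ∞)) = ((2:ℕ∞) : WithTop ℕ∞) by rfl]
    exact WithTop.coe_le_coe.mpr le_top
  have hsucc : ∞ + 1 ≤ (∞ : WithTop ℕ∞) := le_of_eq rfl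
  set Ω := KruskalDomain c₀ δ₁ δ with hΩdef
  have hΩo : IsOpen Ω := UC.kd_open c₀ δ₁ δ
  have hmem : ∀ {μ ν : ℝ}, μ ∈ Set.Icc 0 c₀ → ν ∈ Set.Icc 0 c₀ → (μ, ν) ∈ Ω :=
    fun hμ hν => UC.kd_mem hc₀ hδ₁ hδ hμ hν
  have hIoo : ∀ {x : ℝ × ℝ}, x ∈ Ω → x.1 * x.2 ∈ Set.Ioo (-δ) (c₀^2 + δ) :=
    fun hx => ⟨hx.2.2.2.1, hx.2.2.2.2⟩
  set f : ℝ × ℝ → ℝ := Function.uncurry w with hfdef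
  set f' : ℝ × ℝ → (ℝ × ℝ →L[ℝ] ℝ) := fderiv ℝ f with hf'def
  set P : ℝ × ℝ → ℝ := fun x => f' x (1, 0) with hPdef
  set Q : ℝ × ℝ → ℝ := fun x => f' x (0, 1) with hQdef
  set F : ℝ × ℝ → ℝ := fun x => fderiv ℝ f' x (0, 1) (1, 0) with hFdef
  -- differentiability of f and f'
  have hfd : ∀ x ∈ Ω, HasFDerivAt f (f' x) x := fun x hx =>
    ((hw.contDiffAt (hΩo.mem_nhds hx)).differentiableAt (by simp)).hasFDerivAt
  have hf'c : ContDiffOn ℝ ∞ f' Ω := hw.fderiv_of_isOpen hΩo hsucc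
  have hf'd : ∀ x ∈ Ω, HasFDerivAt f' (fderiv ℝ f' x) x := fun x hx =>
    ((hf'c.contDiffAt (hΩo.mem_nhds hx)).differentiableAt (by simp)).hasFDerivAt
  have hsymm : ∀ x ∈ Ω, fderiv ℝ f' x (1, 0) (0, 1) = F x := by
    intro x hx
    have := (hw.contDiffAt (hΩo.mem_nhds hx)).isSymmSndFDerivAt (by rw [minSmoothness_of_isRCLikeNormedField]; exact h2le)
    exact this (1, 0) (0, 1)
  -- slice derivatives
  have hPd : ∀ μ ν : ℝ, (μ, ν) ∈ Ω → HasDerivAt (fun m => w m ν) (P (μ, ν)) μ :=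
    fun μ ν h => UC.slice1 f (f' (μ, ν)) μ ν (hfd _ h)
  have hQd : ∀ μ ν : ℝ, (μ, ν) ∈ Ω → HasDerivAt (fun n => w μ n) (Q (μ, ν)) ν :=
    fun μ ν h => UC.slice2 f (f' (μ, ν)) μ ν (hfd _ h)
  have hPdν : ∀ μ ν : ℝ, (μ, ν) ∈ Ω → HasDerivAt (fun n => P (μ, n)) (F (μ, ν)) ν :=
    fun μ ν h => UC.slice2_clm f' (fderiv ℝ f' (μ, ν)) μ ν (1, 0) (hf'd _ h)
  have hQdμ : ∀ μ ν : ℝ, (μ, ν) ∈ Ω → HasDerivAt (fun m => Q (m, ν)) (F (μ, ν)) μ := by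
    intro μ ν h
    have := UC.slice1_clm f' (fderiv ℝ f' (μ, ν)) μ ν (0, 1) (hf'd _ h)
    rwa [hsymm _ h] at this
  -- radius-side functions
  set g : ℝ → ℝ := fun y => (R y)^2 with hgdef
  set G' : ℝ → ℝ := deriv g with hG'def
  set V : ℝ → ℝ := fun y => 8*M^2*lam^2 / (R y * Real.exp (R y / (2*M))) with hVdef
  have hRd : ∀ t ∈ Set.Ioo (-δ) (c₀^2+δ), DifferentiableAt ℝ R t := fun t ht =>
    (hR.1.contDiffAt (isOpen_Ioo.mem_nhds ht)).differentiableAt (by simp)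
  have hgd : ∀ t ∈ Set.Ioo (-δ) (c₀^2+δ), HasDerivAt g (G' t) t := fun t ht =>
    ((hRd t ht).pow 2).hasDerivAt
  have hEvΩ2 : ∀ μ ν : ℝ, (μ, ν) ∈ Ω → ∀ᶠ n in nhds ν, (μ, n) ∈ Ω := by
    intro μ ν h
    exact (continuous_const.prodMk continuous_id).continuousAt.preimage_mem_nhds
      (hΩo.mem_nhds h)
  have hEvΩ1 : ∀ μ ν : ℝ, (μ, ν) ∈ Ω → ∀ᶠ m in nhds μ, (m, ν) ∈ Ω := by
    intro μ ν h
    exact (continuous_id.prodMk continuous_const).continuousAt.preimage_mem_nhds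
      (hΩo.mem_nhds h)
  have hkey : ∀ μ ν : ℝ, (μ, ν) ∈ Ω →
      2 * g (μ*ν) * F (μ, ν)
        = V (μ*ν) * w μ ν - μ * G' (μ*ν) * P (μ, ν) - ν * G' (μ*ν) * Q (μ, ν) := by
    intro μ ν h
    have ht := hIoo h
    have he := heq (μ, ν) h
    unfold KruskalEqAt at he
    have e1 : (fun n => (R (μ*n))^2 * deriv (fun m => w m n) μ) =ᶠ[nhds ν]
        (fun n => g (μ*n) * P (μ, n)) := by
      filter_upwards [hEvΩ2 μ ν h] with n hn
      rw [(hPd μ n hn).deriv]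
    have hgμ : HasDerivAt (fun n => g (μ*n)) (G' (μ*ν) * μ) ν := by
      have hmul : HasDerivAt (fun n : ℝ => μ*n) μ ν := by
        simpa using (hasDerivAt_id ν).const_mul μ
      exact (hgd _ ht).comp ν hmul
    have d1 : deriv (fun n => (R (μ*n))^2 * deriv (fun m => w m n) μ) ν
        = G' (μ*ν) * μ * P (μ, ν) + g (μ*ν) * F (μ, ν) := by
      rw [e1.deriv_eq]
      exact (hgμ.mul (hPdν μ ν h)).deriv
    have e2 : (fun m => (R (m*ν))^2 * deriv (fun n => w m n) ν) =ᶠ[nhds μ]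
        (fun m => g (m*ν) * Q (m, ν)) := by
      filter_upwards [hEvΩ1 μ ν h] with m hm
      rw [(hQd m ν hm).deriv]
    have hgν : HasDerivAt (fun m => g (m*ν)) (G' (μ*ν) * ν) μ := by
      have hmul : HasDerivAt (fun m : ℝ => m*ν) ν μ := by
        simpa using (hasDerivAt_id μ).mul_const ν
      exact (hgd _ ht).comp μ hmul
    have d2 : deriv (fun m => (R (m*ν))^2 * deriv (fun n => w m n) ν) μ
        = G' (μ*ν) * ν * Q (μ, ν) + g (μ*ν) * F (μ, ν) := by
      rw [e2.deriv_eq]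
      exact (hgν.mul (hQdμ μ ν h)).deriv
    rw [d1, d2] at he
    have hV : V (μ*ν) = 8*M^2*lam^2 / (R (μ*ν) * Real.exp (R (μ*ν)/(2*M))) := rfl
    rw [hV]
    linarith [he]
  -- continuity
  have hfc : ContinuousOn f Ω := hw.continuousOn
  have hf'cont : ContinuousOn f' Ω := hw.continuousOn_fderiv_of_isOpen hΩo h1le
  have hPc : ContinuousOn P Ω := hf'cont.clm_apply continuousOn_const
  have hQc : ContinuousOn Q Ω := hf'cont.clm_apply continuousOn_const
  have hf''cont : ContinuousOn (fderiv ℝ f') Ω := hf'c.continuousOn_fderiv_of_isOpen hΩo h1le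
  have hFc : ContinuousOn F Ω :=
    (hf''cont.clm_apply continuousOn_const).clm_apply continuousOn_const
  have hG'c : ContinuousOn G' (Set.Ioo (-δ) (c₀^2+δ)) :=
    (hR.1.pow 2).continuousOn_deriv_of_isOpen isOpen_Ioo h1le
  have hRpos : ∀ t ∈ Set.Ioo (-δ) (c₀^2+δ), 0 < R t := fun t ht => (hR.2 t ht).1
  have hVc : ContinuousOn V (Set.Ioo (-δ) (c₀^2+δ)) := by
    apply continuousOn_const.div
    · exact (hR.1.continuousOn).mul
        (Real.continuous_exp.comp_continuousOn ((hR.1.continuousOn).div_const (2*M)))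
    · intro t ht
      have h := hRpos t ht
      positivity
  -- the compact square
  set S : Set (ℝ × ℝ) := (Set.Icc 0 c₀) ×ˢ (Set.Icc 0 c₀) with hSdef
  have hSmem : ∀ {μ ν : ℝ}, μ ∈ Set.Icc 0 c₀ → ν ∈ Set.Icc 0 c₀ → (μ, ν) ∈ S :=
    fun hμ hν => Set.mk_mem_prod hμ hν
  have hSsub : S ⊆ Ω := by
    intro x hx
    have := hmem (hx.1 : x.1 ∈ Set.Icc 0 c₀) hx.2
    rwa [Prod.mk.eta] at this
  have hSc : IsCompact S := isCompact_Icc.prod isCompact_Icc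
  have h00 : ((0:ℝ), (0:ℝ)) ∈ S := hSmem (Set.left_mem_Icc.2 hc₀.le) (Set.left_mem_Icc.2 hc₀.le)
  have hmulS : ∀ x ∈ S, x.1 * x.2 ∈ Set.Ioo (-δ) (c₀^2+δ) := fun x hx => hIoo (hSsub hx)
  have hmulc : ContinuousOn (fun x : ℝ × ℝ => x.1 * x.2) S :=
    (continuous_fst.mul continuous_snd).continuousOn
  -- bounds for w, P, Q on S
  obtain ⟨B1, hB1⟩ := hSc.exists_bound_of_continuousOn (hfc.mono hSsub)
  obtain ⟨B2, hB2⟩ := hSc.exists_bound_of_continuousOn (hPc.mono hSsub)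
  obtain ⟨B3, hB3⟩ := hSc.exists_bound_of_continuousOn (hQc.mono hSsub)
  set B := max (max B1 B2) (max B3 0) with hBdef
  have hB0 : 0 ≤ B := le_trans (le_max_right B3 0) (le_max_right _ _)
  have hBw : ∀ {μ ν : ℝ}, μ ∈ Set.Icc 0 c₀ → ν ∈ Set.Icc 0 c₀ → |w μ ν| ≤ B := by
    intro μ ν hμ hν
    have := hB1 (μ, ν) (hSmem hμ hν)
    rw [Real.norm_eq_abs] at this
    calc |w μ ν| = |f (μ, ν)| := rfl
      _ ≤ B1 := this
      _ ≤ B := le_trans (le_max_left B1 B2) (le_max_left _ _)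
  have hBP : ∀ {μ ν : ℝ}, μ ∈ Set.Icc 0 c₀ → ν ∈ Set.Icc 0 c₀ → |P (μ, ν)| ≤ B := by
    intro μ ν hμ hν
    have := hB2 (μ, ν) (hSmem hμ hν)
    rw [Real.norm_eq_abs] at this
    exact le_trans this (le_trans (le_max_right B1 B2) (le_max_left _ _))
  have hBQ : ∀ {μ ν : ℝ}, μ ∈ Set.Icc 0 c₀ → ν ∈ Set.Icc 0 c₀ → |Q (μ, ν)| ≤ B := by
    intro μ ν hμ hν
    have := hB3 (μ, ν) (hSmem hμ hν)
    rw [Real.norm_eq_abs] at this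
    exact le_trans this (le_trans (le_max_left B3 0) (le_max_right _ _))
  -- bounds for the coefficients on S
  obtain ⟨Gb, hGb⟩ := hSc.exists_bound_of_continuousOn (hG'c.comp hmulc hmulS)
  obtain ⟨Vb, hVb⟩ := hSc.exists_bound_of_continuousOn (hVc.comp hmulc hmulS)
  have hGb0 : 0 ≤ Gb := le_trans (norm_nonneg _) (hGb (0,0) h00)
  have hVb0 : 0 ≤ Vb := le_trans (norm_nonneg _) (hVb (0,0) h00)
  -- lower bound for g on S
  obtain ⟨x₀, hx₀S, hx₀min⟩ := hSc.exists_isMinOn ⟨(0,0), h00⟩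
    ((hR.1.continuousOn).comp hmulc hmulS)
  set ρ := R (x₀.1 * x₀.2) with hρdef
  have hρpos : 0 < ρ := hRpos _ (hmulS _ hx₀S)
  have hglb : ∀ x ∈ S, ρ^2 ≤ g (x.1 * x.2) := by
    intro x hx
    have h : ρ ≤ R (x.1 * x.2) := isMinOn_iff.mp hx₀min x hx
    have h2 := hRpos _ (hmulS _ hx)
    have hgx : g (x.1 * x.2) = (R (x.1 * x.2))^2 := rfl
    rw [hgx]
    nlinarith [h, h2, hρpos]
  -- pointwise bound for F
  have hfw : ∀ μ ν : ℝ, f (μ, ν) = w μ ν := fun _ _ => rfl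
  clear_value Ω f f' P Q F g G' V S B ρ
  set C₀ := (Vb + c₀*Gb) / (2*ρ^2) with hC₀def
  clear_value C₀
  have hC₀0 : 0 ≤ C₀ := by
    rw [hC₀def]
    exact div_nonneg (add_nonneg hVb0 (mul_nonneg hc₀.le hGb0)) (by positivity)
  have hFb : ∀ μ ν : ℝ, μ ∈ Set.Icc 0 c₀ → ν ∈ Set.Icc 0 c₀ →
      |F (μ, ν)| ≤ C₀ * (|w μ ν| + |P (μ, ν)| + |Q (μ, ν)|) := by
    intro μ ν hμ hν
    have hS : (μ, ν) ∈ S := hSmem hμ hν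
    have hk := hkey μ ν (hSsub hS)
    have hg2 : ρ^2 ≤ g (μ*ν) := hglb _ hS
    have habsV : |V (μ*ν)| ≤ Vb := by
      have := hVb (μ, ν) hS; rwa [Real.norm_eq_abs] at this
    have habsG : |G' (μ*ν)| ≤ Gb := by
      have := hGb (μ, ν) hS; rwa [Real.norm_eq_abs] at this
    have hμb : |μ| ≤ c₀ := by rw [abs_of_nonneg hμ.1]; exact hμ.2
    have hνb : |ν| ≤ c₀ := by rw [abs_of_nonneg hν.1]; exact hν.2
    have hRHS : |V (μ*ν) * w μ ν - μ * G' (μ*ν) * P (μ, ν) - ν * G' (μ*ν) * Q (μ, ν)|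
        ≤ (Vb + c₀*Gb) * (|w μ ν| + |P (μ, ν)| + |Q (μ, ν)|) := by
      have t1 : |V (μ*ν) * w μ ν - μ * G' (μ*ν) * P (μ, ν) - ν * G' (μ*ν) * Q (μ, ν)|
          ≤ |V (μ*ν) * w μ ν| + |μ * G' (μ*ν) * P (μ, ν)| + |ν * G' (μ*ν) * Q (μ, ν)| := by
        calc |V (μ*ν) * w μ ν - μ * G' (μ*ν) * P (μ, ν) - ν * G' (μ*ν) * Q (μ, ν)|
            ≤ |V (μ*ν) * w μ ν - μ * G' (μ*ν) * P (μ, ν)| + |ν * G' (μ*ν) * Q (μ, ν)| :=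
              abs_sub _ _
          _ ≤ |V (μ*ν) * w μ ν| + |μ * G' (μ*ν) * P (μ, ν)| + |ν * G' (μ*ν) * Q (μ, ν)| := by
              have := abs_sub (V (μ*ν) * w μ ν) (μ * G' (μ*ν) * P (μ, ν))
              linarith
      have e1 : |V (μ*ν) * w μ ν| ≤ Vb * |w μ ν| := by
        rw [abs_mul]
        exact mul_le_mul_of_nonneg_right habsV (abs_nonneg _)
      have e2 : |μ * G' (μ*ν) * P (μ, ν)| ≤ c₀ * Gb * |P (μ, ν)| := by
        rw [abs_mul, abs_mul]
        have : |μ| * |G' (μ*ν)| ≤ c₀ * Gb := by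
          apply mul_le_mul hμb habsG (abs_nonneg _) hc₀.le
        exact mul_le_mul_of_nonneg_right this (abs_nonneg _)
      have e3 : |ν * G' (μ*ν) * Q (μ, ν)| ≤ c₀ * Gb * |Q (μ, ν)| := by
        rw [abs_mul, abs_mul]
        have : |ν| * |G' (μ*ν)| ≤ c₀ * Gb := by
          apply mul_le_mul hνb habsG (abs_nonneg _) hc₀.le
        exact mul_le_mul_of_nonneg_right this (abs_nonneg _)
      nlinarith [mul_nonneg hVb0 (abs_nonneg (P (μ, ν))),
        mul_nonneg hVb0 (abs_nonneg (Q (μ, ν))),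
        mul_nonneg (mul_nonneg hc₀.le hGb0) (abs_nonneg (w μ ν)), t1, e1, e2, e3]
    have hlhs : 2*ρ^2*|F (μ, ν)| ≤ |2 * g (μ*ν) * F (μ, ν)| := by
      rw [abs_mul, abs_mul]
      have hgpos : 0 < g (μ*ν) := lt_of_lt_of_le (by positivity) hg2
      rw [abs_of_pos hgpos, abs_of_pos (by norm_num : (0:ℝ) < 2)]
      nlinarith [abs_nonneg (F (μ, ν))]
    rw [hk] at hlhs
    rw [hC₀def, div_mul_eq_mul_div, le_div_iff₀ (by positivity : (0:ℝ) < 2*ρ^2)]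
    linarith [le_trans hlhs hRHS]
  -- vanishing on the axes
  have h0cc : (0:ℝ) ∈ Set.Icc (0:ℝ) c₀ := Set.left_mem_Icc.2 hc₀.le
  have hP0 : ∀ μ ∈ Set.Icc (0:ℝ) c₀, P (μ, 0) = 0 := by
    intro μ hμ
    have hm : (μ, (0:ℝ)) ∈ Ω := hmem hμ h0cc
    have hev : (fun m => w m 0) =ᶠ[nhds μ] (fun _ => (0:ℝ)) := by
      filter_upwards [hEvΩ1 μ 0 hm] with m hmΩ
      exact h2 (m, 0) hmΩ le_rfl
    have hd := (hPd μ 0 hm).deriv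
    rw [← hd, hev.deriv_eq, deriv_const]
  have hQ0 : ∀ ν ∈ Set.Icc (0:ℝ) c₀, Q (0, ν) = 0 := by
    intro ν hν
    have hm : ((0:ℝ), ν) ∈ Ω := hmem h0cc hν
    have hev : (fun n => w 0 n) =ᶠ[nhds ν] (fun _ => (0:ℝ)) := by
      filter_upwards [hEvΩ2 0 ν hm] with n hnΩ
      exact h1 (0, n) hnΩ le_rfl
    have hd := (hQd 0 ν hm).deriv
    rw [← hd, hev.deriv_eq, deriv_const]
  have hw0 : ∀ ν ∈ Set.Icc (0:ℝ) c₀, w 0 ν = 0 := fun ν hν =>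
    h1 (0, ν) (hmem h0cc hν) le_rfl
  -- fundamental theorem of calculus representations
  have hsubIcc : ∀ {ν t : ℝ}, ν ∈ Set.Icc (0:ℝ) c₀ → t ∈ Set.uIcc 0 ν → t ∈ Set.Icc (0:ℝ) c₀ := by
    intro ν t hν ht
    rw [Set.uIcc_of_le hν.1] at ht
    exact ⟨ht.1, le_trans ht.2 hν.2⟩
  have hFint2 : ∀ μ ν : ℝ, μ ∈ Set.Icc (0:ℝ) c₀ → ν ∈ Set.Icc (0:ℝ) c₀ →
      IntervalIntegrable (fun t => F (μ, t)) volume 0 ν := by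
    intro μ ν hμ hν
    apply ContinuousOn.intervalIntegrable
    apply hFc.comp (Continuous.continuousOn (continuous_const.prodMk continuous_id))
    intro t ht
    exact hmem hμ (hsubIcc hν ht)
  have hFint1 : ∀ μ ν : ℝ, μ ∈ Set.Icc (0:ℝ) c₀ → ν ∈ Set.Icc (0:ℝ) c₀ →
      IntervalIntegrable (fun t => F (t, ν)) volume 0 μ := by
    intro μ ν hμ hν
    apply ContinuousOn.intervalIntegrable
    apply hFc.comp (Continuous.continuousOn (continuous_id.prodMk continuous_const))
    intro t ht
    exact hmem (hsubIcc hμ ht) hν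
  have hPint1 : ∀ μ ν : ℝ, μ ∈ Set.Icc (0:ℝ) c₀ → ν ∈ Set.Icc (0:ℝ) c₀ →
      IntervalIntegrable (fun t => P (t, ν)) volume 0 μ := by
    intro μ ν hμ hν
    apply ContinuousOn.intervalIntegrable
    apply hPc.comp (Continuous.continuousOn (continuous_id.prodMk continuous_const))
    intro t ht
    exact hmem (hsubIcc hμ ht) hν
  have hPint : ∀ μ ν : ℝ, μ ∈ Set.Icc (0:ℝ) c₀ → ν ∈ Set.Icc (0:ℝ) c₀ →
      P (μ, ν) = ∫ t in (0:ℝ)..ν, F (μ, t) := by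
    intro μ ν hμ hν
    have h := intervalIntegral.integral_eq_sub_of_hasDerivAt
      (f := fun s => P (μ, s)) (f' := fun t => F (μ, t))
      (fun t ht => hPdν μ t (hmem hμ (hsubIcc hν ht))) (hFint2 μ ν hμ hν)
    beta_reduce at h
    rw [hP0 μ hμ, sub_zero] at h
    exact h.symm
  have hQint : ∀ μ ν : ℝ, μ ∈ Set.Icc (0:ℝ) c₀ → ν ∈ Set.Icc (0:ℝ) c₀ →
      Q (μ, ν) = ∫ t in (0:ℝ)..μ, F (t, ν) := by
    intro μ ν hμ hν
    have h := intervalIntegral.integral_eq_sub_of_hasDerivAt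
      (f := fun s => Q (s, ν)) (f' := fun t => F (t, ν))
      (fun t ht => hQdμ t ν (hmem (hsubIcc hμ ht) hν)) (hFint1 μ ν hμ hν)
    beta_reduce at h
    rw [hQ0 ν hν, sub_zero] at h
    exact h.symm
  have hwint : ∀ μ ν : ℝ, μ ∈ Set.Icc (0:ℝ) c₀ → ν ∈ Set.Icc (0:ℝ) c₀ →
      w μ ν = ∫ t in (0:ℝ)..μ, P (t, ν) := by
    intro μ ν hμ hν
    have h := intervalIntegral.integral_eq_sub_of_hasDerivAt
      (f := fun s => w s ν) (f' := fun t => P (t, ν))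
      (fun t ht => hPd t ν (hmem (hsubIcc hμ ht) hν)) (hPint1 μ ν hμ hν)
    beta_reduce at h
    rw [hw0 ν hν, sub_zero] at h
    exact h.symm
  -- the Picard iteration bound
  set C := 3*C₀ + 1 with hCdef
  have hC1 : (1:ℝ) ≤ C := by rw [hCdef]; linarith
  have h3C : 3 * C₀ ≤ C := by rw [hCdef]; linarith
  have hC0 : (0:ℝ) ≤ C := le_trans zero_le_one hC1
  clear_value C
  have key : ∀ n : ℕ, ∀ μ ∈ Set.Icc (0:ℝ) c₀, ∀ ν ∈ Set.Icc (0:ℝ) c₀,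
      |w μ ν| ≤ B * C^n * (μ+ν)^n / (n.factorial : ℝ)
      ∧ |P (μ, ν)| ≤ B * C^n * (μ+ν)^n / (n.factorial : ℝ)
      ∧ |Q (μ, ν)| ≤ B * C^n * (μ+ν)^n / (n.factorial : ℝ) := by
    intro n
    induction n with
    | zero =>
      intro μ hμ ν hν
      simp only [pow_zero, Nat.factorial_zero, Nat.cast_one, mul_one, div_one]
      exact ⟨hBw hμ hν, hBP hμ hν, hBQ hμ hν⟩
    | succ n ih =>
      intro μ hμ ν hν
      have hμ0 := hμ.1
      have hν0 := hν.1
      have hfn : (0:ℝ) < (n.factorial : ℝ) := by exact_mod_cast n.factorial_pos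
      have hfact : ((n+1).factorial : ℝ) = ((n:ℝ)+1) * (n.factorial : ℝ) := by
        rw [Nat.factorial_succ]; push_cast; ring
      have hBC : (0:ℝ) ≤ B * C^(n+1) := mul_nonneg hB0 (pow_nonneg hC0 _)
      have hden : (0:ℝ) < ((n:ℝ)+1) * (n.factorial : ℝ) := by positivity
      -- pointwise bound on F from the induction hypothesis
      have hFpt : ∀ a b : ℝ, a ∈ Set.Icc (0:ℝ) c₀ → b ∈ Set.Icc (0:ℝ) c₀ →
          |F (a, b)| ≤ C * (B * C^n / (n.factorial : ℝ)) * (a+b)^n := by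
        intro a b ha hb
        obtain ⟨i1, i2, i3⟩ := ih a ha b hb
        have hf := hFb a b ha hb
        have hx : (0:ℝ) ≤ B * C^n * (a+b)^n / (n.factorial : ℝ) := by
          have := add_nonneg ha.1 hb.1
          positivity
        calc |F (a, b)| ≤ C₀ * (|w a b| + |P (a, b)| + |Q (a, b)|) := hf
          _ ≤ C₀ * (3 * (B * C^n * (a+b)^n / (n.factorial : ℝ))) := by
              apply mul_le_mul_of_nonneg_left (by linarith) hC₀0
          _ = (3*C₀) * (B * C^n * (a+b)^n / (n.factorial : ℝ)) := by ring
          _ ≤ C * (B * C^n * (a+b)^n / (n.factorial : ℝ)) := mul_le_mul_of_nonneg_right h3C hx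
          _ = C * (B * C^n / (n.factorial : ℝ)) * (a+b)^n := by ring
      have hIccsub : ∀ {b t : ℝ}, b ∈ Set.Icc (0:ℝ) c₀ → t ∈ Set.Icc 0 b →
          t ∈ Set.Icc (0:ℝ) c₀ := fun hb ht => ⟨ht.1, le_trans ht.2 hb.2⟩
      have hcont1 : IntervalIntegrable
          (fun t => C * (B * C^n / (n.factorial : ℝ)) * (μ+t)^n) volume 0 ν :=
        Continuous.intervalIntegrable
          (continuous_const.mul ((continuous_const.add continuous_id).pow n)) 0 ν
      have hcont2 : IntervalIntegrable
          (fun t => C * (B * C^n / (n.factorial : ℝ)) * (t+ν)^n) volume 0 μ :=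
        Continuous.intervalIntegrable
          (continuous_const.mul ((continuous_id.add continuous_const).pow n)) 0 μ
      have hcont3 : IntervalIntegrable
          (fun t => (B * C^n / (n.factorial : ℝ)) * (t+ν)^n) volume 0 μ :=
        Continuous.intervalIntegrable
          (continuous_const.mul ((continuous_id.add continuous_const).pow n)) 0 μ
      -- the bound for P
      have hPb : |P (μ, ν)| ≤ B * C^(n+1) * (μ+ν)^(n+1) / ((n+1).factorial : ℝ) := by
        rw [hPint μ ν hμ hν]
        calc |∫ t in (0:ℝ)..ν, F (μ, t)| ≤ ∫ t in (0:ℝ)..ν, |F (μ, t)| :=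
              intervalIntegral.abs_integral_le_integral_abs hν.1
          _ ≤ ∫ t in (0:ℝ)..ν, C * (B * C^n / (n.factorial : ℝ)) * (μ+t)^n := by
              apply intervalIntegral.integral_mono_on hν.1 (hFint2 μ ν hμ hν).abs hcont1
              intro t ht
              exact hFpt μ t hμ (hIccsub hν ht)
          _ = C * (B * C^n / (n.factorial : ℝ)) * (((μ+ν)^(n+1) - μ^(n+1)) / ((n:ℝ)+1)) := by
              rw [intervalIntegral.integral_const_mul]
              congr 1
              have h := intervalIntegral.integral_comp_add_left (a := (0:ℝ)) (b := ν)
                (fun y => y^n) μ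
              rw [h, add_zero, integral_pow]
          _ ≤ B * C^(n+1) * (μ+ν)^(n+1) / ((n+1).factorial : ℝ) := by
              rw [hfact]
              have e : C * (B * C^n / (n.factorial : ℝ)) * (((μ+ν)^(n+1) - μ^(n+1)) / ((n:ℝ)+1))
                  = B * C^(n+1) * ((μ+ν)^(n+1) - μ^(n+1)) / (((n:ℝ)+1) * (n.factorial : ℝ)) := by
                field_simp
                ring
              rw [e]
              apply (div_le_div_iff_of_pos_right hden).mpr
              have hμp : (0:ℝ) ≤ μ^(n+1) := by positivity
              nlinarith [mul_nonneg hBC hμp]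
      -- the bound for Q
      have hQb : |Q (μ, ν)| ≤ B * C^(n+1) * (μ+ν)^(n+1) / ((n+1).factorial : ℝ) := by
        rw [hQint μ ν hμ hν]
        calc |∫ t in (0:ℝ)..μ, F (t, ν)| ≤ ∫ t in (0:ℝ)..μ, |F (t, ν)| :=
              intervalIntegral.abs_integral_le_integral_abs hμ.1
          _ ≤ ∫ t in (0:ℝ)..μ, C * (B * C^n / (n.factorial : ℝ)) * (t+ν)^n := by
              apply intervalIntegral.integral_mono_on hμ.1 (hFint1 μ ν hμ hν).abs hcont2
              intro t ht
              exact hFpt t ν (hIccsub hμ ht) hν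
          _ = C * (B * C^n / (n.factorial : ℝ)) * (((μ+ν)^(n+1) - ν^(n+1)) / ((n:ℝ)+1)) := by
              rw [intervalIntegral.integral_const_mul]
              congr 1
              have h := intervalIntegral.integral_comp_add_right (a := (0:ℝ)) (b := μ)
                (fun y => y^n) ν
              rw [h, zero_add, integral_pow]
          _ ≤ B * C^(n+1) * (μ+ν)^(n+1) / ((n+1).factorial : ℝ) := by
              rw [hfact]
              have e : C * (B * C^n / (n.factorial : ℝ)) * (((μ+ν)^(n+1) - ν^(n+1)) / ((n:ℝ)+1))
                  = B * C^(n+1) * ((μ+ν)^(n+1) - ν^(n+1)) / (((n:ℝ)+1) * (n.factorial : ℝ)) := by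
                field_simp
                ring
              rw [e]
              apply (div_le_div_iff_of_pos_right hden).mpr
              have hνp : (0:ℝ) ≤ ν^(n+1) := by positivity
              nlinarith [mul_nonneg hBC hνp]
      -- the bound for w
      have hwb : |w μ ν| ≤ B * C^(n+1) * (μ+ν)^(n+1) / ((n+1).factorial : ℝ) := by
        rw [hwint μ ν hμ hν]
        calc |∫ t in (0:ℝ)..μ, P (t, ν)| ≤ ∫ t in (0:ℝ)..μ, |P (t, ν)| :=
              intervalIntegral.abs_integral_le_integral_abs hμ.1
          _ ≤ ∫ t in (0:ℝ)..μ, (B * C^n / (n.factorial : ℝ)) * (t+ν)^n := by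
              apply intervalIntegral.integral_mono_on hμ.1 (hPint1 μ ν hμ hν).abs hcont3
              intro t ht
              have := (ih t (hIccsub hμ ht) ν hν).2.1
              calc |P (t, ν)| ≤ B * C^n * (t+ν)^n / (n.factorial : ℝ) := this
                _ = (B * C^n / (n.factorial : ℝ)) * (t+ν)^n := by ring
          _ = (B * C^n / (n.factorial : ℝ)) * (((μ+ν)^(n+1) - ν^(n+1)) / ((n:ℝ)+1)) := by
              rw [intervalIntegral.integral_const_mul]
              congr 1
              have h := intervalIntegral.integral_comp_add_right (a := (0:ℝ)) (b := μ)
                (fun y => y^n) ν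
              rw [h, zero_add, integral_pow]
          _ ≤ B * C^(n+1) * (μ+ν)^(n+1) / ((n+1).factorial : ℝ) := by
              rw [hfact]
              have e : (B * C^n / (n.factorial : ℝ)) * (((μ+ν)^(n+1) - ν^(n+1)) / ((n:ℝ)+1))
                  = B * C^n * ((μ+ν)^(n+1) - ν^(n+1)) / (((n:ℝ)+1) * (n.factorial : ℝ)) := by
                rw [div_mul_div_comm, mul_comm ((n.factorial : ℝ))]
              rw [e]
              apply (div_le_div_iff_of_pos_right hden).mpr
              have hνp : (0:ℝ) ≤ ν^(n+1) := by positivity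
              have hCn : C^n ≤ C^(n+1) := pow_le_pow_right₀ hC1 (Nat.le_succ n)
              have hsp : (0:ℝ) ≤ (μ+ν)^(n+1) := by positivity
              nlinarith [mul_nonneg (mul_nonneg hB0 (pow_nonneg hC0 n)) hνp,
                mul_nonneg hB0 hsp]
      exact ⟨hwb, hPb, hQb⟩
  -- conclusion
  intro μ hμ ν hν
  have hb : ∀ n : ℕ, |w μ ν| ≤ B * (C*(2*c₀))^n / (n.factorial : ℝ) := by
    intro n
    have h := (key n μ hμ ν hν).1
    have hfn : (0:ℝ) < (n.factorial : ℝ) := by exact_mod_cast n.factorial_pos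
    calc |w μ ν| ≤ B * C^n * (μ+ν)^n / (n.factorial : ℝ) := h
      _ ≤ B * (C*(2*c₀))^n / (n.factorial : ℝ) := by
          rw [mul_pow]
          apply (div_le_div_iff_of_pos_right hfn).mpr
          rw [mul_assoc]
          apply mul_le_mul_of_nonneg_left ?_ hB0
          apply mul_le_mul_of_nonneg_left ?_ (pow_nonneg hC0 n)
          apply pow_le_pow_left₀ (add_nonneg hμ.1 hν.1)
          linarith [hμ.2, hν.2]
  have hlim : Tendsto (fun n : ℕ => B * (C*(2*c₀))^n / (n.factorial : ℝ)) atTop (nhds 0) := by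
    have h := FloorSemiring.tendsto_pow_div_factorial_atTop (K := ℝ) (C*(2*c₀))
    have h2 := h.const_mul B
    rw [mul_zero] at h2
    convert h2 using 2 with n
    ring
  have hle : |w μ ν| ≤ 0 := ge_of_tendsto' hlim hb
  exact abs_eq_zero.mp (le_antisymm hle (abs_nonneg _))
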